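/- Consider the infinite binary tree on positive even integers where node 2k has children determined as follows: node m (even) with m = q·2^(s+1) + 2^s for s ≥ 1 and q ≥ 0 has children m - 2^(s-1) and m + 2^(s-1), and leaves are the odd positive integers. For natural numbers i < j, the node p·2 where p = j AND NOT(2^(Nat.log2 (Nat.xor i j)) - 1) (clearing from j all bits below the leading bit of i XOR j) is a common ancestor of the leaves 2i+1 and 2j+1, and it is the lowest such common ancestor. -/

import Mathlib

/-- In the interlaced ortree, the even index `m = q·2^(s+1) + 2^s` (with `s ≥ 1`)
is an ancestor of the (odd) leaf index `t` iff `t` lies in the open interval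
`(m - 2^s, m + 2^s)`. -/
def OrtreeAncestor (m t : ℕ) : Prop :=
  ∃ q s, 1 ≤ s ∧ m = q * 2 ^ (s + 1) + 2 ^ s ∧ m - 2 ^ s < t ∧ t < m + 2 ^ s

/-- Two interlaced representations with different shift are never equal. -/
private lemma ortree_rep_ne (q1 s1 q2 s2 : ℕ) (h : s1 < s2) :
    q1 * 2 ^ (s1 + 1) + 2 ^ s1 ≠ q2 * 2 ^ (s2 + 1) + 2 ^ s2 := by
  intro hEq
  have hd : (2:ℕ) ^ (s1 + 1) ∣ q2 * 2 ^ (s2 + 1) + 2 ^ s2 :=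
    dvd_add ((pow_dvd_pow 2 (by omega)).mul_left q2) (pow_dvd_pow 2 (by omega))
  rw [← hEq] at hd
  have hd2 : (2:ℕ) ^ (s1 + 1) ∣ 2 ^ s1 :=
    (Nat.dvd_add_right (dvd_mul_left _ _)).mp hd
  have h1 := Nat.le_of_dvd (by positivity) hd2
  have h2 : (2:ℕ) ^ s1 < 2 ^ (s1 + 1) := Nat.pow_lt_pow_right (by norm_num) (by omega)
  omega

/-- The interlaced representation is unique. -/
private lemma ortree_rep_unique {q1 s1 q2 s2 : ℕ}
    (h : q1 * 2 ^ (s1 + 1) + 2 ^ s1 = q2 * 2 ^ (s2 + 1) + 2 ^ s2) :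
    s1 = s2 ∧ q1 = q2 := by
  have hs : s1 = s2 := by
    rcases lt_trichotomy s1 s2 with h' | h' | h'
    · exact absurd h (ortree_rep_ne _ _ _ _ h')
    · exact h'
    · exact absurd h.symm (ortree_rep_ne _ _ _ _ h')
  subst hs
  refine ⟨rfl, ?_⟩
  have h2 := Nat.add_right_cancel h
  exact Nat.eq_of_mul_eq_mul_right (by positivity) h2

/-- Core covering step: if the node `q·2^(s+1)+2^s` covers both leaves `2i+1`
and `2j+1` (where `i = D + ri`, `j = D + P + rj`, `D = 2P·q'`, `P = 2^L`),
then its interval contains the whole interval `(2D, 2D+4P)` of the LCA. -/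
private lemma ortree_step (L P q s q' ri rj t : ℕ) (hPdef : P = 2 ^ L)
    (hri : ri < P) (hrj : rj < P)
    (hloi : q * 2 ^ (s + 1) < 2 * (P * 2 * q' + ri) + 1)
    (hhii : 2 * (P * 2 * q' + ri) + 1 < q * 2 ^ (s + 1) + 2 ^ (s + 1))
    (hhij : 2 * (P * 2 * q' + P + rj) + 1 < q * 2 ^ (s + 1) + 2 ^ (s + 1))
    (htlo : P * 2 * q' * 2 < t) (hthi : t < P * 2 * q' * 2 + P * 4) :
    q * 2 ^ (s + 1) < t ∧ t < q * 2 ^ (s + 1) + 2 ^ (s + 1) := by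
  have hP : 0 < P := by rw [hPdef]; positivity
  have bridgeA : (2:ℕ) ^ (L + 1) = P * 2 := by rw [hPdef, pow_succ]
  have bridgeB : (2:ℕ) ^ (L + 2) = P * 4 := by rw [hPdef, pow_succ, pow_succ]; ring
  -- First: s ≥ L + 1, else the node's interval would contain the even point
  -- `2p = (2q'+1)·2^(L+1)` strictly inside, which is impossible.
  have hsL : L + 1 ≤ s := by
    by_contra hcon
    push_neg at hcon
    obtain ⟨k, hk⟩ : (2:ℕ) ^ (s + 1) ∣ (2 * q' + 1) * 2 ^ (L + 1) :=
      (pow_dvd_pow 2 (by omega)).mul_left _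
    have hkexp : (2 * q' + 1) * 2 ^ (L + 1) = P * 2 * q' * 2 + P * 2 := by
      rw [bridgeA]; ring
    have hk2 : 2 ^ (s + 1) * k = P * 2 * q' * 2 + P * 2 := by omega
    have hlt1 : q * 2 ^ (s + 1) < 2 ^ (s + 1) * k := by omega
    have hlt2 : 2 ^ (s + 1) * k < (q + 1) * 2 ^ (s + 1) := by
      have hgx : (q + 1) * 2 ^ (s + 1) = q * 2 ^ (s + 1) + 2 ^ (s + 1) := by ring
      omega
    rw [Nat.mul_comm (2 ^ (s + 1)) k] at hlt1 hlt2
    have hq1 : q < k := Nat.lt_of_mul_lt_mul_right hlt1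
    have hq2 : k < q + 1 := Nat.lt_of_mul_lt_mul_right hlt2
    omega
  -- Now the dyadic interval of the node contains the dyadic interval of 2p.
  obtain ⟨b, hb⟩ : (2:ℕ) ^ (L + 2) ∣ q * 2 ^ (s + 1) :=
    (pow_dvd_pow 2 (by omega)).mul_left q
  obtain ⟨c, hc⟩ : (2:ℕ) ^ (L + 2) ∣ q * 2 ^ (s + 1) + 2 ^ (s + 1) :=
    dvd_add ((pow_dvd_pow 2 (by omega)).mul_left q) (pow_dvd_pow 2 (by omega))
  rw [bridgeB] at hb hc
  have hbr1 : P * 4 * q' = P * 2 * q' * 2 := by ring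
  have hbr2 : P * 4 * (q' + 1) = P * 2 * q' * 2 + P * 4 := by ring
  have hBA : P * 4 * b ≤ P * 4 * q' := by
    have h1 : P * 4 * b < P * 4 * (q' + 1) := by omega
    have h2 : b < q' + 1 := Nat.lt_of_mul_lt_mul_left h1
    exact Nat.mul_le_mul_left _ (by omega)
  have hAC : P * 4 * (q' + 1) ≤ P * 4 * c := by
    have h1 : P * 4 * q' < P * 4 * c := by omega
    have h2 : q' < c := Nat.lt_of_mul_lt_mul_left h1
    exact Nat.mul_le_mul_left _ (by omega)
  omega

/-- For `i < j`, the node `2p`, where `p` is obtained from `j` by clearing all bits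
strictly below the leading bit of `i ^^^ j`, is a common ancestor of the leaves
`2i+1` and `2j+1`, and it is the lowest such common ancestor (any other common
ancestor covers all leaves that `2p` covers). -/
theorem ortree_lca (i j : ℕ) (hij : i < j)
    (p : ℕ) (hp : p = j - j % 2 ^ (Nat.log2 (i ^^^ j))) :
    OrtreeAncestor (2 * p) (2 * i + 1) ∧ OrtreeAncestor (2 * p) (2 * j + 1) ∧
      ∀ m, OrtreeAncestor m (2 * i + 1) → OrtreeAncestor m (2 * j + 1) →
        ∀ t, OrtreeAncestor (2 * p) t → OrtreeAncestor m t := by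
  have hxne : i ^^^ j ≠ 0 := by
    intro h
    exact absurd (xor_eq_zero_iff.mp h) (by omega)
  set L := Nat.log2 (i ^^^ j) with hL
  have h1 : 2 ^ L ≤ i ^^^ j := Nat.log2_self_le hxne
  have h2 : i ^^^ j < 2 ^ (L + 1) := Nat.lt_log2_self
  -- the high parts (above bit L) of i and j agree
  have hdiv : i / 2 ^ (L + 1) = j / 2 ^ (L + 1) := by
    rw [← Nat.shiftRight_eq_div_pow, ← Nat.shiftRight_eq_div_pow]
    refine Nat.eq_of_testBit_eq fun k => ?_
    rw [Nat.testBit_shiftRight, Nat.testBit_shiftRight]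
    have hf : (i ^^^ j).testBit (L + 1 + k) = false :=
      Nat.testBit_lt_two_pow
        (lt_of_lt_of_le h2 (Nat.pow_le_pow_right (by norm_num) (by omega)))
    rw [Nat.testBit_xor] at hf
    cases hik : i.testBit (L + 1 + k) <;> cases hjk : j.testBit (L + 1 + k) <;>
      simp_all
  have h2' : i ^^^ j < 2 ^ L * 2 := by rw [← pow_succ]; exact h2
  have hdL : (i ^^^ j) / 2 ^ L = 1 := Nat.div_eq_of_lt_le (by omega) (by omega)
  -- bits of i and j at position L differ
  have hne : i / 2 ^ L % 2 ≠ j / 2 ^ L % 2 := by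
    intro he
    have ht : (i ^^^ j).testBit L = true := by
      rw [Nat.testBit_eq_decide_div_mod_eq, hdL]; decide
    rw [Nat.testBit_xor, Nat.testBit_eq_decide_div_mod_eq, Nat.testBit_eq_decide_div_mod_eq, he] at ht
    simp at ht
  set P := 2 ^ L with hPdef
  have hP : 0 < P := by rw [hPdef]; positivity
  have hPP : 2 ^ (L + 1) = P * 2 := by rw [hPdef, pow_succ]
  have hi2 : i % (P * 2) = i % P + P * (i / P % 2) := Nat.mod_mul
  have hj2 : j % (P * 2) = j % P + P * (j / P % 2) := Nat.mod_mul
  have hdmi : P * 2 * (i / (P * 2)) + i % (P * 2) = i := Nat.div_add_mod i (P * 2)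
  have hdmj : P * 2 * (j / (P * 2)) + j % (P * 2) = j := Nat.div_add_mod j (P * 2)
  rw [hPP] at hdiv
  rw [hdiv] at hdmi
  have him : i % P < P := Nat.mod_lt _ hP
  have hjm : j % P < P := Nat.mod_lt _ hP
  -- since i < j and the bits at L differ, bit L of i is 0 and of j is 1
  have hbits : i / P % 2 = 0 ∧ j / P % 2 = 1 := by
    rcases Nat.mod_two_eq_zero_or_one (i / P) with hbi | hbi <;>
      rcases Nat.mod_two_eq_zero_or_one (j / P) with hbj | hbj <;>
      rw [hbi] at hi2 <;> rw [hbj] at hj2 <;>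
      simp only [Nat.mul_zero, Nat.mul_one, Nat.add_zero] at hi2 hj2
    · exact absurd (hbi.trans hbj.symm) hne
    · exact ⟨hbi, hbj⟩
    · exfalso; omega
    · exact absurd (hbi.trans hbj.symm) hne
  obtain ⟨hbi, hbj⟩ := hbits
  rw [hbi] at hi2; rw [hbj] at hj2
  simp only [Nat.mul_zero, Nat.mul_one, Nat.add_zero] at hi2 hj2
  set q' := j / (P * 2) with hq'
  set D := P * 2 * q' with hD
  have hieq : i = D + i % P := by omega
  have hjeq : j = D + P + j % P := by omega
  have hpeq : p = D + P := by omega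
  have hP4 : 2 ^ (L + 1 + 1) = P * 4 := by rw [hPdef, pow_succ, pow_succ]; ring
  have hq4 : q' * (P * 4) = 2 * D := by rw [hD]; ring
  have h2p : 2 * p = q' * 2 ^ (L + 1 + 1) + 2 ^ (L + 1) := by
    rw [hP4, hPP, hq4]; omega
  refine ⟨⟨q', L + 1, by omega, h2p, ?_, ?_⟩, ⟨q', L + 1, by omega, h2p, ?_, ?_⟩, ?_⟩
  · rw [hPP]; omega
  · rw [hPP]; omega
  · rw [hPP]; omega
  · rw [hPP]; omega
  rintro m ⟨q1, s1, hs1, hm1, hlo1, hhi1⟩ ⟨q2, s2, hs2, hm2, hlo2, hhi2⟩ t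
    ⟨q0, s0, hs0, hm0, hlo0, hhi0⟩
  -- the two representations of m coincide
  obtain ⟨hseq, hqeq⟩ := ortree_rep_unique (hm2.symm.trans hm1)
  subst hseq; subst hqeq
  -- identify the representation of 2p
  obtain ⟨hs0eq, hq0eq⟩ := ortree_rep_unique (hm0.symm.trans h2p)
  subst hs0eq; subst hq0eq
  -- clean interval bounds for t around 2p
  have htlo : P * 2 * q' * 2 < t := by
    rw [hPP] at hlo0; rw [← hD]; omega
  have hthi : t < P * 2 * q' * 2 + P * 4 := by
    rw [hPP] at hhi0; rw [← hD]; omega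
  have hps : (2:ℕ) ^ (s2 + 1) = 2 ^ s2 * 2 := pow_succ 2 s2
  have hstep := ortree_step L P q2 s2 q' (i % P) (j % P) t hPdef him hjm
    (by rw [← hD, ← hieq]; omega)
    (by rw [← hD, ← hieq]; omega)
    (by rw [← hD, ← hjeq]; omega)
    htlo hthi
  exact ⟨q2, s2, hs2, hm1, by omega, by omega⟩
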